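/- Let x:[0,∞)→ℝ^N be Lipschitz with each component x_i absolutely continuous, and suppose for almost every t there exist coefficients α_{ij}(t)=α_{ji}(t)∈[0,1] such that ẋ_i(t)=∑_{j≠i} α_{ij}(t)·χ_{|x_i(t)-x_j(t)|≤1}·(x_j(t)-x_i(t)). Then for every T^1<T^2, the closed interval [min_i x_i(T^2), max_i x_i(T^2)] is contained in [min_i x_i(T^1), max_i x_i(T^1)]. -/

import Mathlib

open Real Set Finset MeasureTheory

/-- A Lipschitz function whose derivative is a.e. nonpositive on `[a, b]` is decreasing
from `a` to `b`. -/
lemma lip_deriv_nonpos_le {f : ℝ → ℝ} {C : NNReal} (hf : LipschitzWith C f)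
    {a b : ℝ} (hab : a ≤ b)
    (h : ∀ᵐ t ∂(volume.restrict (Set.Icc a b)), ∃ d, d ≤ 0 ∧ HasDerivAt f d t) :
    f b ≤ f a := by
  set g : ℝ → ℝ := fun t => (C : ℝ) * t - f t with hg_def
  have hg : Monotone g := by
    intro s t hst
    have h2 : |f t - f s| ≤ (C : ℝ) * |t - s| := by
      have := hf.dist_le_mul t s
      rwa [Real.dist_eq, Real.dist_eq] at this
    have h3 : f t - f s ≤ (C : ℝ) * (t - s) := by
      have := (le_abs_self (f t - f s)).trans h2
      rwa [abs_of_nonneg (by linarith : (0:ℝ) ≤ t - s)] at this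
    simp only [hg_def]
    linarith
  have hgc : Continuous g := by
    have : Continuous f := hf.continuous
    fun_prop
  -- Stieltjes function of `g` equals `g`
  have hst_eq : ∀ t, hg.stieltjesFunction t = g t := by
    intro t
    rw [Monotone.stieltjesFunction_eq]
    exact rightLim_eq_of_tendsto (h := nhdsGT_neBot t)
      ((hgc.tendsto t).mono_left nhdsWithin_le_nhds)
  set μ := hg.stieltjesFunction.measure with hμ
  set G : ℝ → ℝ := fun t => (μ.rnDeriv volume t).toReal with hG
  have hder : ∀ᵐ t, HasDerivAt g (G t) t := hg.ae_hasDerivAt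
  -- a.e. on Icc a b, (C : ENNReal) ≤ rnDeriv
  have hae : ∀ᵐ t ∂(volume.restrict (Set.Icc a b)), (C : ENNReal) ≤ μ.rnDeriv volume t := by
    filter_upwards [h, ae_restrict_of_ae hder] with t ht hgt
    obtain ⟨d, hd0, hfd⟩ := ht
    have hf' : HasDerivAt f ((C : ℝ) - G t) t := by
      have : HasDerivAt (fun u => (C : ℝ) * u - g u) ((C : ℝ) - G t) t := by
        have h0 : HasDerivAt (fun u => (C : ℝ) * u - g u) ((C : ℝ) * 1 - G t) t :=
          ((hasDerivAt_id t).const_mul (C : ℝ)).sub hgt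
        rw [mul_one] at h0; exact h0
      convert this using 1
      ext u; simp [hg_def]
    have hd : d = (C : ℝ) - G t := hfd.unique hf'
    have hCG : (C : ℝ) ≤ G t := by linarith
    calc (C : ENNReal) = ENNReal.ofReal (C : ℝ) := by simp
    _ ≤ ENNReal.ofReal (G t) := ENNReal.ofReal_le_ofReal hCG
    _ ≤ μ.rnDeriv volume t := by
        simpa [hG] using ENNReal.ofReal_toReal_le (a := μ.rnDeriv volume t)
  have hae' : ∀ᵐ t ∂(volume.restrict (Set.Ioc a b)), (C : ENNReal) ≤ μ.rnDeriv volume t :=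
    ae_restrict_of_ae_restrict_of_subset Set.Ioc_subset_Icc_self hae
  have hint : (C : ENNReal) * volume (Set.Ioc a b) ≤ μ (Set.Ioc a b) := by
    calc (C : ENNReal) * volume (Set.Ioc a b)
        = ∫⁻ _ in Set.Ioc a b, (C : ENNReal) ∂volume := by
          rw [MeasureTheory.setLIntegral_const]
      _ ≤ ∫⁻ t in Set.Ioc a b, μ.rnDeriv volume t ∂volume := lintegral_mono_ae hae'
      _ ≤ μ (Set.Ioc a b) := Measure.setLIntegral_rnDeriv_le _
  have hμIoc : μ (Set.Ioc a b) = ENNReal.ofReal (g b - g a) := by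
    rw [hμ, StieltjesFunction.measure_Ioc, hst_eq, hst_eq]
  rw [hμIoc, Real.volume_Ioc] at hint
  have hC0 : (0:ℝ) ≤ (C:ℝ) := C.coe_nonneg
  have : ENNReal.ofReal ((C : ℝ) * (b - a)) ≤ ENNReal.ofReal (g b - g a) := by
    rw [ENNReal.ofReal_mul hC0, ENNReal.ofReal_coe_nnreal]; exact hint
  have hgba : (0:ℝ) ≤ g b - g a := sub_nonneg.2 (hg hab)
  have hfin : (C : ℝ) * (b - a) ≤ g b - g a :=
    (ENNReal.ofReal_le_ofReal_iff hgba).1 this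
  simp only [hg_def] at hfin
  linarith

/-- The supremum of the agents is decreasing in time. -/
lemma sup_decreasing (N : ℕ) (hN : 0 < N) (x : Fin N → ℝ → ℝ)
    (hLip : ∃ C : NNReal, ∀ i, LipschitzWith C (x i))
    (hode : ∀ᵐ t ∂(volume.restrict (Set.Ici (0:ℝ))),
      ∃ α : Fin N → Fin N → ℝ,
        (∀ i j, α i j = α j i ∧ 0 ≤ α i j ∧ α i j ≤ 1) ∧
        ∀ i, HasDerivAt (x i)
          (∑ j ∈ Finset.univ.erase i,
            α i j * (if |x i t - x j t| ≤ 1 then (1:ℝ) else 0) * (x j t - x i t)) t) :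
    ∀ T1 T2 : ℝ, 0 ≤ T1 → T1 ≤ T2 → (⨆ i, x i T2) ≤ ⨆ i, x i T1 := by
  haveI : Nonempty (Fin N) := ⟨⟨0, hN⟩⟩
  obtain ⟨C, hC⟩ := hLip
  set M : ℝ → ℝ := fun t => ⨆ i, x i t with hM_def
  have hbdd : ∀ t, BddAbove (Set.range fun i => x i t) := fun t =>
    (Set.finite_range _).bddAbove
  have hM : LipschitzWith C M := by
    apply LipschitzWith.of_dist_le_mul
    intro s t
    rw [Real.dist_eq, Real.dist_eq, abs_sub_le_iff]
    have key : ∀ u v : ℝ, M u - M v ≤ (C : ℝ) * |u - v| := by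
      intro u v
      rw [sub_le_iff_le_add]
      apply ciSup_le
      intro i
      have h1 : x i u - x i v ≤ (C : ℝ) * |u - v| := by
        have := (hC i).dist_le_mul u v
        rw [Real.dist_eq, Real.dist_eq] at this
        calc x i u - x i v ≤ |x i u - x i v| := le_abs_self _
        _ ≤ (C : ℝ) * |u - v| := this
      have h2 : x i v ≤ M v := le_ciSup (hbdd v) i
      linarith
    constructor
    · exact key s t
    · have := key t s
      rwa [abs_sub_comm] at this
  intro T1 T2 hT1 hT12
  apply lip_deriv_nonpos_le hM hT12
  have hsub : Set.Icc T1 T2 ⊆ Set.Ici (0:ℝ) := fun t ht => hT1.trans ht.1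
  have hode' : ∀ᵐ t ∂(volume.restrict (Set.Icc T1 T2)),
      ∃ α : Fin N → Fin N → ℝ,
        (∀ i j, α i j = α j i ∧ 0 ≤ α i j ∧ α i j ≤ 1) ∧
        ∀ i, HasDerivAt (x i)
          (∑ j ∈ Finset.univ.erase i,
            α i j * (if |x i t - x j t| ≤ 1 then (1:ℝ) else 0) * (x j t - x i t)) t :=
    ae_restrict_of_ae_restrict_of_subset hsub hode
  have hdiff : ∀ᵐ t ∂(volume.restrict (Set.Icc T1 T2)), DifferentiableAt ℝ M t :=
    ae_restrict_of_ae hM.ae_differentiableAt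
  filter_upwards [hode', hdiff] with t ht hMt
  obtain ⟨α, hα, hder⟩ := ht
  obtain ⟨i, hi⟩ := Finite.exists_max (fun i => x i t)
  have hMeq : M t = x i t :=
    le_antisymm (ciSup_le hi) (le_ciSup (hbdd t) i)
  set D : ℝ := ∑ j ∈ Finset.univ.erase i,
      α i j * (if |x i t - x j t| ≤ 1 then (1:ℝ) else 0) * (x j t - x i t) with hD
  have hxi : HasDerivAt (x i) D t := hder i
  refine ⟨deriv M t, ?_, hMt.hasDerivAt⟩
  -- `M - x i` has a local min at `t`
  have hmin : IsLocalMin (fun u => M u - x i u) t := by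
    apply Filter.Eventually.of_forall
    intro u
    have h1 : x i u ≤ M u := le_ciSup (hbdd u) i
    simp only [hMeq]
    simp only [sub_self]
    linarith
  have hdiffsub : DifferentiableAt ℝ (fun u => M u - x i u) t :=
    hMt.sub hxi.differentiableAt
  have hzero : deriv (fun u => M u - x i u) t = 0 := hmin.deriv_eq_zero
  have hds : deriv (fun u => M u - x i u) t = deriv M t - deriv (x i) t :=
    deriv_sub hMt hxi.differentiableAt
  have hMd : deriv M t = D := by
    rw [hds] at hzero
    rw [hxi.deriv] at hzero
    linarith
  rw [hMd, hD]
  apply Finset.sum_nonpos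
  intro j hj
  apply mul_nonpos_of_nonneg_of_nonpos
  · apply mul_nonneg ((hα i j).2.1)
    split <;> norm_num
  · exact sub_nonpos.2 (hi j)

/-- Contractivity of the support for 1D Krasovskii solutions of the HK model: if each agent
moves a.e. by a symmetric convex combination of attractions toward agents at distance at
most 1, then the interval spanned by the agents is weakly decreasing in time. -/
theorem stmt_10 (N : ℕ) (hN : 0 < N) (x : Fin N → ℝ → ℝ)
    (hLip : ∃ C : NNReal, ∀ i, LipschitzWith C (x i))
    (hode : ∀ᵐ t ∂(volume.restrict (Set.Ici (0:ℝ))),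
      ∃ α : Fin N → Fin N → ℝ,
        (∀ i j, α i j = α j i ∧ 0 ≤ α i j ∧ α i j ≤ 1) ∧
        ∀ i, HasDerivAt (x i)
          (∑ j ∈ Finset.univ.erase i,
            α i j * (if |x i t - x j t| ≤ 1 then (1:ℝ) else 0) * (x j t - x i t)) t) :
    ∀ T1 T2 : ℝ, 0 ≤ T1 → T1 ≤ T2 →
      Set.Icc (⨅ i, x i T2) (⨆ i, x i T2) ⊆ Set.Icc (⨅ i, x i T1) (⨆ i, x i T1) := by
  haveI : Nonempty (Fin N) := ⟨⟨0, hN⟩⟩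
  intro T1 T2 hT1 hT12
  have hsup : (⨆ i, x i T2) ≤ ⨆ i, x i T1 :=
    sup_decreasing N hN x hLip hode T1 T2 hT1 hT12
  -- apply the sup lemma to `-x` to handle the infimum
  set y : Fin N → ℝ → ℝ := fun i t => -(x i t) with hy
  have hyLip : ∃ C : NNReal, ∀ i, LipschitzWith C (y i) := by
    obtain ⟨C, hC⟩ := hLip
    exact ⟨C, fun i => (hC i).neg⟩
  have hyode : ∀ᵐ t ∂(volume.restrict (Set.Ici (0:ℝ))),
      ∃ α : Fin N → Fin N → ℝ,
        (∀ i j, α i j = α j i ∧ 0 ≤ α i j ∧ α i j ≤ 1) ∧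
        ∀ i, HasDerivAt (y i)
          (∑ j ∈ Finset.univ.erase i,
            α i j * (if |y i t - y j t| ≤ 1 then (1:ℝ) else 0) * (y j t - y i t)) t := by
    filter_upwards [hode] with t ht
    obtain ⟨α, hα, hder⟩ := ht
    refine ⟨α, hα, fun i => ?_⟩
    have : HasDerivAt (y i) _ t := (hder i).neg
    convert this using 1
    rw [← Finset.sum_neg_distrib]
    apply Finset.sum_congr rfl
    intro j _
    have habs : |y i t - y j t| = |x i t - x j t| := by
      simp only [hy]; rw [← abs_neg]; ring_nf
    rw [habs]
    simp only [hy]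
    ring
  have hysup : (⨆ i, y i T2) ≤ ⨆ i, y i T1 :=
    sup_decreasing N hN y hyLip hyode T1 T2 hT1 hT12
  -- ⨅ x i T = -(⨆ y i T)
  have hinf_eq : ∀ T : ℝ, (⨅ i, x i T) = -(⨆ i, y i T) := by
    intro T
    obtain ⟨i0, hi0⟩ := Finite.exists_min (fun i : Fin N => x i T)
    have h1 : (⨅ i, x i T) = x i0 T :=
      le_antisymm (ciInf_le (Set.finite_range (fun i => x i T)).bddBelow i0) (le_ciInf hi0)
    have h2 : (⨆ i, y i T) = y i0 T := by
      apply le_antisymm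
      · apply ciSup_le
        intro j
        simp only [hy, neg_le_neg_iff]
        exact hi0 j
      · exact le_ciSup (Set.finite_range (fun i => y i T)).bddAbove i0
    rw [h1, h2]; simp [hy]
  have hinf : (⨅ i, x i T1) ≤ ⨅ i, x i T2 := by
    rw [hinf_eq T1, hinf_eq T2]
    linarith
  intro z hz
  exact ⟨hinf.trans hz.1, hz.2.trans hsup⟩
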